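/- Let R be a finite family of disks in ℝ² and define I as the intersection of all closed half-planes H such that H intersects every disk of R. Then a disk D ∈ R is impossible (its realized point is never an extreme point of the convex hull, for any realization) if and only if D ⊆ I. -/

import Mathlib

open Metric Set
open scoped RealInnerProductSpace

variable {F : Type*} [NormedAddCommGroup F] [InnerProductSpace ℝ F]

/-- lower bound of a linear functional on a closed ball -/
lemma aux_min_le {v y cc : F} {rr : ℝ} (hy : y ∈ closedBall cc rr) :
    ⟪v, cc⟫ - rr * ‖v‖ ≤ ⟪v, y⟫ := by
  have hd : ‖y - cc‖ ≤ rr := by simpa [dist_eq_norm] using hy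
  have h1 : |⟪v, y - cc⟫| ≤ ‖v‖ * ‖y - cc‖ := abs_real_inner_le_norm v (y - cc)
  have h2 : ⟪v, y - cc⟫ = ⟪v, y⟫ - ⟪v, cc⟫ := inner_sub_right v y cc
  have h3 : -(‖v‖ * ‖y - cc‖) ≤ ⟪v, y - cc⟫ := neg_le_of_abs_le h1
  nlinarith [norm_nonneg v, norm_nonneg (y - cc), mul_le_mul_of_nonneg_left hd (norm_nonneg v)]

/-- strict version when the direction is not the bad tangent direction -/
lemma aux_strict {v p cc : F} {rr : ℝ} (hrr : 0 < rr) (hv : v ≠ 0)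
    (hp : p ∈ closedBall cc rr) (hbad : ‖v‖⁻¹ • v ≠ rr⁻¹ • (cc - p)) :
    ⟪v, cc⟫ - rr * ‖v‖ < ⟪v, p⟫ := by
  have hvn : 0 < ‖v‖ := norm_pos_iff.mpr hv
  have hd : ‖p - cc‖ ≤ rr := by simpa [dist_eq_norm] using hp
  have hle : ⟪v, cc⟫ - rr * ‖v‖ ≤ ⟪v, p⟫ := aux_min_le hp
  rcases lt_or_eq_of_le hle with h | h
  · exact h
  · -- equality case: Cauchy-Schwarz equality
    exfalso
    have h2 : ⟪v, p - cc⟫ = ⟪v, p⟫ - ⟪v, cc⟫ := inner_sub_right v p cc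
    have heq : ⟪v, p - cc⟫ = -(rr * ‖v‖) := by rw [h2, ← h]; ring
    have h1 : |⟪v, p - cc⟫| ≤ ‖v‖ * ‖p - cc‖ := abs_real_inner_le_norm v (p - cc)
    have hnorm : ‖p - cc‖ = rr := by
      have := abs_le.mp h1
      nlinarith [this.1, this.2]
    have hCS : ⟪-v, p - cc⟫ = ‖-v‖ * ‖p - cc‖ := by
      rw [inner_neg_left, heq, norm_neg, hnorm]; ring
    have := inner_eq_norm_mul_iff_real.mp hCS
    rw [hnorm, norm_neg] at this
    -- this : rr • -v = ‖v‖ • (p - cc)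
    apply hbad
    have hv2 : rr • v = ‖v‖ • (cc - p) := by
      have h5 := congrArg (fun z => -z) this
      simp only [← smul_neg, neg_neg, neg_sub] at h5
      exact h5
    have h6 := congrArg (fun z => (rr⁻¹ * ‖v‖⁻¹) • z) hv2
    simp only [smul_smul] at h6
    rw [show rr⁻¹ * ‖v‖⁻¹ * rr = ‖v‖⁻¹ by field_simp,
        show rr⁻¹ * ‖v‖⁻¹ * ‖v‖ = rr⁻¹ by field_simp] at h6
    exact h6

/-- existence of a nonzero orthogonal vector in the plane -/
lemma aux_orth (v : EuclideanSpace ℝ (Fin 2)) (hv : v ≠ 0) :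
    ∃ w : EuclideanSpace ℝ (Fin 2), w ≠ 0 ∧ ⟪v, w⟫ = 0 := by
  refine ⟨(EuclideanSpace.equiv (Fin 2) ℝ).symm ![-(v 1), v 0], ?_, ?_⟩
  · intro hw
    apply hv
    have h0 := congrArg (fun x => x 0) hw
    have h1 := congrArg (fun x => x 1) hw
    simp [EuclideanSpace.equiv] at h0 h1
    ext i
    fin_cases i <;> simp_all
  · simp [PiLp.inner_apply, Fin.sum_univ_two, EuclideanSpace.equiv, RCLike.inner_apply]
    ring

/-- avoiding finitely many bad directions -/
lemma aux_avoid {v₀ w : EuclideanSpace ℝ (Fin 2)} (hv₀ : v₀ ≠ 0) (hw : w ≠ 0)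
    (horth : ⟪v₀, w⟫ = 0) {δ : ℝ} (hδ : 0 < δ) {B : Set (EuclideanSpace ℝ (Fin 2))}
    (hB : B.Finite) :
    ∃ t ∈ Set.Ioo (0:ℝ) δ, ‖v₀ + t • w‖⁻¹ • (v₀ + t • w) ∉ B := by
  set g : ℝ → EuclideanSpace ℝ (Fin 2) := fun t => ‖v₀ + t • w‖⁻¹ • (v₀ + t • w) with hg
  have hne : ∀ t : ℝ, v₀ + t • w ≠ 0 := by
    intro t h
    apply hv₀
    have : ⟪v₀, v₀ + t • w⟫ = 0 := by rw [h, inner_zero_right]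
    rw [inner_add_right, inner_smul_right, horth, real_inner_self_eq_norm_sq] at this
    simpa [norm_eq_zero] using (by nlinarith [norm_nonneg v₀, sq_nonneg ‖v₀‖] : ‖v₀‖ = 0)
  have hinj : Set.InjOn g (Set.Ioo (0:ℝ) δ) := by
    intro s hs t ht hst
    have hs0 : (0:ℝ) < ‖v₀ + s • w‖ := norm_pos_iff.mpr (hne s)
    have ht0 : (0:ℝ) < ‖v₀ + t • w‖ := norm_pos_iff.mpr (hne t)
    have h1 : ⟪v₀, g s⟫ = ⟪v₀, g t⟫ := by rw [hst]
    have h2 : ∀ u : ℝ, ⟪v₀, g u⟫ = ‖v₀ + u • w‖⁻¹ * ‖v₀‖ ^ 2 := by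
      intro u
      rw [hg]
      simp only [inner_smul_right, inner_add_right, inner_smul_right, horth,
        real_inner_self_eq_norm_sq]
      ring
    rw [h2, h2] at h1
    have hv₀n : (0:ℝ) < ‖v₀‖ ^ 2 := by
      have : ‖v₀‖ ≠ 0 := norm_ne_zero_iff.mpr hv₀
      positivity
    have hnorms : ‖v₀ + s • w‖ = ‖v₀ + t • w‖ := by
      have h7 : ‖v₀ + s • w‖⁻¹ = ‖v₀ + t • w‖⁻¹ :=
        mul_right_cancel₀ hv₀n.ne' h1
      exact (inv_injective h7)
    have : v₀ + s • w = v₀ + t • w := by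
      have := hst
      rw [hg] at this
      simp only at this
      rw [hnorms] at this
      exact smul_right_injective _ (by positivity : (0:ℝ) < ‖v₀ + t • w‖⁻¹).ne' this
    have : s • w = t • w := add_left_cancel this
    exact smul_left_injective ℝ hw this
  have hIoo : (Set.Ioo (0:ℝ) δ).Infinite := Set.Ioo_infinite hδ
  have himg : (g '' Set.Ioo (0:ℝ) δ).Infinite := hIoo.image hinj
  obtain ⟨x, hx, hxB⟩ := himg.exists_notMem_finite hB
  obtain ⟨t, ht, rfl⟩ := hx
  exact ⟨t, ht, hxB⟩

set_option maxHeartbeats 1000000 in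
/-- Let `I` be the intersection of all closed half-planes that intersect every disk of a
family `R` of disks.  A disk `D = R i₀` is *impossible* (its realized point is never an
extreme point of the convex hull, for any realization) if and only if `D ⊆ I`. -/
theorem stmt18 (n : ℕ) (c : Fin n → EuclideanSpace ℝ (Fin 2)) (r : Fin n → ℝ)
    (hr : ∀ i, 0 < r i) (i₀ : Fin n) :
    (∀ P : Fin n → EuclideanSpace ℝ (Fin 2),
        (∀ i, P i ∈ closedBall (c i) (r i)) →
        P i₀ ∈ convexHull ℝ (Set.range P \ {P i₀}))
    ↔ closedBall (c i₀) (r i₀) ⊆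
        {x : EuclideanSpace ℝ (Fin 2) |
          ∀ (f : EuclideanSpace ℝ (Fin 2) →L[ℝ] ℝ) (a : ℝ), f ≠ 0 →
            (∀ i, ∃ y ∈ closedBall (c i) (r i), f y ≤ a) → f x ≤ a} := by
  classical
  constructor
  · -- easy direction
    intro h x hx f a _ hfa
    set P : Fin n → EuclideanSpace ℝ (Fin 2) :=
      fun i => if hi : i = i₀ then x else (hfa i).choose with hP
    have hPmem : ∀ i, P i ∈ closedBall (c i) (r i) := by
      intro i
      by_cases hi : i = i₀
      · subst hi; simpa [hP] using hx
      · simpa [hP, hi] using (hfa i).choose_spec.1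
    have hPi₀ : P i₀ = x := by simp [hP]
    have key := h P hPmem
    have hsub : Set.range P \ {P i₀} ⊆ {z | f z ≤ a} := by
      rintro z ⟨⟨i, rfl⟩, hz⟩
      by_cases hi : i = i₀
      · exfalso; apply hz; rw [hi]; exact Set.mem_singleton _
      · simpa [hP, hi] using (hfa i).choose_spec.2
    have hcvx : Convex ℝ {z : EuclideanSpace ℝ (Fin 2) | f z ≤ a} :=
      convex_halfSpace_le ⟨f.map_add, f.map_smul⟩ a
    have := convexHull_min hsub hcvx key
    rwa [hPi₀] at this
  · -- hard direction
    intro hI P hP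
    by_contra hc
    set p := P i₀ with hp
    set S : Set (EuclideanSpace ℝ (Fin 2)) := Set.range P \ {p} with hS
    have hSfin : S.Finite := (Set.finite_range P).diff
    -- separation
    obtain ⟨v₀, hv₀, hv₀S⟩ : ∃ v₀ : EuclideanSpace ℝ (Fin 2), v₀ ≠ 0 ∧
        ∀ z ∈ S, ⟪v₀, z⟫ < ⟪v₀, p⟫ := by
      rcases S.eq_empty_or_nonempty with hSe | hSne
      · refine ⟨EuclideanSpace.single 0 1, ?_, by simp [hSe]⟩
        intro h0
        have := congrArg (fun x => x 0) h0
        simp [EuclideanSpace.single] at this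
      · obtain ⟨f, u, hfu, hup⟩ :=
          geometric_hahn_banach_closed_point (convex_convexHull ℝ S)
            (hSfin.isClosed_convexHull (𝕜 := ℝ)) hc
        refine ⟨(InnerProductSpace.toDual ℝ _).symm f, ?_, ?_⟩
        · intro h0
          obtain ⟨z, hz⟩ := hSne
          have hfz : f z < u := hfu z (subset_convexHull ℝ S hz)
          have hf0 : f = 0 := by
            have := congrArg (InnerProductSpace.toDual ℝ (EuclideanSpace ℝ (Fin 2))) h0
            simpa using this
          rw [hf0] at hfz hup
          simp at hfz hup
          linarith
        · intro z hz
          rw [InnerProductSpace.toDual_symm_apply, InnerProductSpace.toDual_symm_apply]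
          exact lt_trans (hfu z (subset_convexHull ℝ S hz)) hup
    obtain ⟨w, hw0, hworth⟩ := aux_orth v₀ hv₀
    -- a margin δ keeping separation under perturbation
    obtain ⟨δ, hδ0, hδ⟩ : ∃ δ : ℝ, 0 < δ ∧ ∀ t ∈ Set.Ioo (0:ℝ) δ, ∀ z ∈ S,
        ⟪v₀ + t • w, z⟫ < ⟪v₀ + t • w, p⟫ := by
      rcases S.eq_empty_or_nonempty with hSe | hSne
      · exact ⟨1, one_pos, by simp [hSe]⟩
      · have hFne : hSfin.toFinset.Nonempty := by
          simpa [Set.Finite.toFinset_nonempty] using hSne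
        set g : EuclideanSpace ℝ (Fin 2) → ℝ :=
          fun z => (⟪v₀, p⟫ - ⟪v₀, z⟫) / (|⟪w, p⟫ - ⟪w, z⟫| + 1) with hgdef
        refine ⟨hSfin.toFinset.inf' hFne g, ?_, ?_⟩
        · rw [Finset.lt_inf'_iff]
          intro z hz
          have hzS : z ∈ S := hSfin.mem_toFinset.mp hz
          have h1 : 0 < ⟪v₀, p⟫ - ⟪v₀, z⟫ := sub_pos.mpr (hv₀S z hzS)
          have h2 : 0 < |⟪w, p⟫ - ⟪w, z⟫| + 1 := by positivity
          exact div_pos h1 h2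
        · rintro t ⟨ht0, htδ⟩ z hz
          have hle : hSfin.toFinset.inf' hFne g ≤ g z :=
            Finset.inf'_le g (hSfin.mem_toFinset.mpr hz)
          have htg : t < g z := lt_of_lt_of_le htδ hle
          have h2 : 0 < |⟪w, p⟫ - ⟪w, z⟫| + 1 := by positivity
          have h3 : t * (|⟪w, p⟫ - ⟪w, z⟫| + 1) < ⟪v₀, p⟫ - ⟪v₀, z⟫ := by
            rw [hgdef] at htg
            exact (lt_div_iff₀ h2).mp htg
          have h4 : ⟪w, z⟫ - ⟪w, p⟫ ≤ |⟪w, p⟫ - ⟪w, z⟫| := by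
            rw [abs_sub_comm]; exact le_abs_self _
          simp only [inner_add_left, real_inner_smul_left]
          nlinarith [mul_le_mul_of_nonneg_left h4 ht0.le]
    -- avoid tangential bad directions
    have hBfin : (Set.range fun i => (r i)⁻¹ • (c i - p)).Finite := Set.finite_range _
    obtain ⟨t, htI, htB⟩ := aux_avoid hv₀ hw0 hworth hδ0 hBfin
    set v : EuclideanSpace ℝ (Fin 2) := v₀ + t • w with hvdef
    have hv : v ≠ 0 := by
      intro h0
      apply hv₀
      have : ⟪v₀, v⟫ = 0 := by rw [h0, inner_zero_right]
      rw [hvdef, inner_add_right, inner_smul_right, hworth, real_inner_self_eq_norm_sq] at this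
      have : ‖v₀‖ = 0 := by nlinarith [norm_nonneg v₀]
      simpa [norm_eq_zero] using this
    have hvn : (0:ℝ) < ‖v‖ := norm_pos_iff.mpr hv
    -- the functional and the threshold
    set f : EuclideanSpace ℝ (Fin 2) →L[ℝ] ℝ := innerSL ℝ v with hfdef
    have hfapp : ∀ x, f x = ⟪v, x⟫ := fun x => innerSL_apply_apply ℝ v x
    have hfne : f ≠ 0 := by
      intro h0
      apply hv
      have : f v = 0 := by rw [h0]; simp
      rw [hfapp, real_inner_self_eq_norm_sq] at this
      have : ‖v‖ = 0 := by nlinarith [norm_nonneg v]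
      simpa [norm_eq_zero] using this
    have hne : (Finset.univ : Finset (Fin n)).Nonempty := ⟨i₀, Finset.mem_univ i₀⟩
    set a : ℝ := Finset.univ.sup' hne (fun i => ⟪v, c i⟫ - r i * ‖v‖) with ha
    -- the half-plane {f ≤ a} meets every disk
    have hmeets : ∀ i, ∃ y ∈ closedBall (c i) (r i), f y ≤ a := by
      intro i
      refine ⟨c i - (r i / ‖v‖) • v, ?_, ?_⟩
      · rw [mem_closedBall, dist_eq_norm]
        have : c i - (r i / ‖v‖) • v - c i = -((r i / ‖v‖) • v) := by abel
        rw [this, norm_neg, norm_smul, Real.norm_eq_abs,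
          abs_of_nonneg (div_nonneg (hr i).le (norm_nonneg v))]
        rw [div_mul_cancel₀ _ hvn.ne']
      · rw [hfapp, inner_sub_right, inner_smul_right, real_inner_self_eq_norm_sq]
        have : ⟪v, c i⟫ - r i / ‖v‖ * ‖v‖ ^ 2 = ⟪v, c i⟫ - r i * ‖v‖ := by
          field_simp
        rw [this, ha]
        exact Finset.le_sup' (fun i => ⟪v, c i⟫ - r i * ‖v‖) (Finset.mem_univ i)
    -- but f p > a, contradicting p ∈ D ⊆ I
    have hpa : f p ≤ a := hI (hP i₀) f a hfne hmeets
    have hgt : a < f p := by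
      rw [ha, Finset.sup'_lt_iff]
      intro i _
      rw [hfapp]
      by_cases hiP : P i = p
      · have hpmem : p ∈ closedBall (c i) (r i) := hiP ▸ hP i
        have hbad : ‖v‖⁻¹ • v ≠ (r i)⁻¹ • (c i - p) := by
          intro hcontra
          exact htB ⟨i, hcontra.symm⟩
        exact aux_strict (hr i) hv hpmem hbad
      · have hPiS : P i ∈ S := ⟨⟨i, rfl⟩, hiP⟩
        have h1 : ⟪v, c i⟫ - r i * ‖v‖ ≤ ⟪v, P i⟫ := aux_min_le (hP i)
        have h2 : ⟪v, P i⟫ < ⟪v, p⟫ := hδ t htI (P i) hPiS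
        linarith
    linarith
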